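/- Let φ : [τ₁, ∞) → ℝ be locally Lipschitz with φ'(τ) ≤ (φ(τ)² − 1)φ(τ) for a.e. τ ≥ τ₁, φ > 0, and suppose lim_{τ→∞} φ(τ) = 1. If additionally ψ(τ) = φ(τ) + (c/δ)e^{−δτ} satisfies ψ' ≤ (φ²−1)φ a.e., then ψ(τ) ≥ 1 for all τ ≥ τ₁; consequently φ(τ) ≥ 1 − (c/δ)e^{−δτ}. -/

import Mathlib

open MeasureTheory

open Set Filter NNReal


/-- Uniform local slope bound for a locally Lipschitz function on a compact interval. -/
lemma uniform_loc_lip {g : ℝ → ℝ} (hg : LocallyLipschitz g) (a b : ℝ) :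
    ∃ K : ℝ, 0 ≤ K ∧ ∀ x ∈ Set.Icc a b, ∀ᶠ z in nhds x, g z - g x ≤ K * |z - x| := by
  have h : ∀ x : ℝ, ∃ KV : ℝ≥0 × Set ℝ, IsOpen KV.2 ∧ x ∈ KV.2 ∧ LipschitzOnWith KV.1 g KV.2 := by
    intro x
    obtain ⟨K, t, ht, hl⟩ := hg x
    obtain ⟨V, hVt, hVo, hxV⟩ := mem_nhds_iff.mp ht
    exact ⟨(K, V), hVo, hxV, hl.mono hVt⟩
  choose KV hopen hmem hlip using h
  obtain ⟨s, -, hcover⟩ := isCompact_Icc.elim_nhds_subcover (fun x => (KV x).2)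
      (fun x _ => (hopen x).mem_nhds (hmem x))
  refine ⟨(s.sup (fun x => (KV x).1) : ℝ≥0), NNReal.coe_nonneg _, ?_⟩
  intro x hx
  obtain ⟨x₀, hx₀s, hxV⟩ := Set.mem_iUnion₂.mp (hcover hx)
  filter_upwards [(hopen x₀).mem_nhds hxV] with z hz
  have hd : dist (g z) (g x) ≤ ((KV x₀).1 : ℝ) * dist z x := (hlip x₀).dist_le_mul z hz x hxV
  have hK : ((KV x₀).1 : ℝ) ≤ ((s.sup (fun x => (KV x).1) : ℝ≥0) : ℝ) :=
    NNReal.coe_le_coe.mpr (Finset.le_sup (f := fun x => (KV x).1) hx₀s)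
  calc g z - g x ≤ |g z - g x| := le_abs_self _
    _ = dist (g z) (g x) := (Real.dist_eq _ _).symm
    _ ≤ ((KV x₀).1 : ℝ) * dist z x := hd
    _ ≤ _ * |z - x| := by
        rw [Real.dist_eq]
        exact mul_le_mul_of_nonneg_right hK (abs_nonneg _)


/-- If `g` is continuous with a uniform local upper slope bound, and a.e. on `(a,b)` it has a
nonpositive derivative, then `g b ≤ g a`. -/
lemma key_dec {g e : ℝ → ℝ} {a b K : ℝ}
    (hab : a ≤ b) (hcont : Continuous g) (hK : 0 ≤ K)
    (hloc : ∀ x ∈ Set.Icc a b, ∀ᶠ z in nhds x, g z - g x ≤ K * |z - x|)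
    (hae : ∀ᵐ t ∂(volume.restrict (Set.Ioo a b)), HasDerivAt g (e t) t ∧ e t ≤ 0) :
    g b ≤ g a := by
  rcases eq_or_lt_of_le hab with rfl | hab
  · exact le_rfl
  have key : ∀ ε : ℝ, 0 < ε → g b ≤ g a + ε * (K + 1 + (b - a)) := by
    intro ε hε
    set P : ℝ → Prop := fun t => HasDerivAt g (e t) t ∧ e t ≤ 0 with hPdef
    have hN : volume ({t | ¬ P t} ∩ Set.Ioo a b) = 0 := by
      rw [← Measure.restrict_apply' measurableSet_Ioo]
      exact hae
    have hN' : volume (({t | ¬ P t} ∩ Set.Ioo a b) ∪ {a}) = 0 :=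
      measure_union_null hN (measure_singleton a)
    obtain ⟨U, hNU, hUopen, hUvol⟩ :
        ∃ U ⊇ ({t | ¬ P t} ∩ Set.Ioo a b) ∪ {a}, IsOpen U ∧ volume U < ENNReal.ofReal ε := by
      apply Set.exists_isOpen_lt_of_lt
      rw [hN']
      exact ENNReal.ofReal_pos.mpr hε
    have hUfin : ∀ s : Set ℝ, volume (U ∩ s) ≠ ⊤ := fun s =>
      ((measure_mono Set.inter_subset_left).trans_lt
        (hUvol.trans ENNReal.ofReal_lt_top)).ne
    set m : ℝ → ℝ := fun t => (volume (U ∩ Set.Ioc a t)).toReal with hmdef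
    have hsplit : ∀ x z : ℝ, a ≤ x → x ≤ z →
        m z = m x + (volume (U ∩ Set.Ioc x z)).toReal := by
      intro x z hax hxz
      have h1 : U ∩ Set.Ioc a z = (U ∩ Set.Ioc a x) ∪ (U ∩ Set.Ioc x z) := by
        rw [← Set.inter_union_distrib_left, Set.Ioc_union_Ioc_eq_Ioc hax hxz]
      have h2 : Disjoint (U ∩ Set.Ioc a x) (U ∩ Set.Ioc x z) :=
        (Set.Ioc_disjoint_Ioc_of_le le_rfl).mono Set.inter_subset_right Set.inter_subset_right
      simp only [hmdef]
      rw [h1, measure_union h2 (hUopen.measurableSet.inter measurableSet_Ioc),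
        ENNReal.toReal_add (hUfin _) (hUfin _)]
    have hmle : ∀ x z : ℝ, x ≤ z → (volume (U ∩ Set.Ioc x z)).toReal ≤ z - x := by
      intro x z hxz
      apply ENNReal.toReal_le_of_le_ofReal (by linarith)
      calc volume (U ∩ Set.Ioc x z) ≤ volume (Set.Ioc x z) :=
            measure_mono Set.inter_subset_right
        _ = ENNReal.ofReal (z - x) := Real.volume_Ioc
    have hma : m a = 0 := by simp [hmdef]
    have hmc : ContinuousOn m (Set.Icc a b) := by
      apply LipschitzOnWith.continuousOn (K := 1)
      apply LipschitzOnWith.of_dist_le_mul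
      intro x hx y hy
      rw [NNReal.coe_one, one_mul, Real.dist_eq, Real.dist_eq]
      rcases le_total x y with h | h
      · have h1 := hsplit x y hx.1 h
        have h2 := hmle x y h
        have h3 : (0:ℝ) ≤ (volume (U ∩ Set.Ioc x y)).toReal := ENNReal.toReal_nonneg
        rw [abs_sub_comm, abs_of_nonneg (by linarith), abs_sub_comm, abs_of_nonneg (by linarith)]
        linarith
      · have h1 := hsplit y x hy.1 h
        have h2 := hmle y x h
        have h3 : (0:ℝ) ≤ (volume (U ∩ Set.Ioc y x)).toReal := ENNReal.toReal_nonneg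
        rw [abs_of_nonneg (by linarith), abs_of_nonneg (by linarith)]
        linarith
    set f : ℝ → ℝ := fun t => g t - (K + 1) * m t with hfdef
    set B : ℝ → ℝ := fun t => g a + ε * (t - a) with hBdef
    have hfb : f b ≤ B b := by
      apply image_le_of_liminf_slope_right_le_deriv_boundary (f := f) (B := B) (B' := fun _ => ε)
        (hcont.continuousOn.sub (continuousOn_const.mul hmc))
        (by simp [hfdef, hBdef, hma])
        (continuousOn_const.add (continuousOn_const.mul
          ((continuousOn_id).sub continuousOn_const)))
        (fun x _ => by
          simpa [hBdef] using (((hasDerivWithinAt_id x (Set.Ici x)).sub_const a).const_mul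
            ε).const_add (g a))
        ?_ (Set.right_mem_Icc.mpr hab.le)
      intro x hx r hr
      by_cases hxU : x ∈ U
      · obtain ⟨η, hη, hball⟩ := Metric.isOpen_iff.mp hUopen x hxU
        apply Filter.Eventually.frequently
        have hmin : x < min (x + η) b := lt_min (by linarith) hx.2
        filter_upwards [Ioo_mem_nhdsGT_of_mem (Set.mem_Ico.mpr ⟨le_rfl, hmin⟩),
          eventually_nhdsWithin_of_eventually_nhds (hloc x (Set.mem_Icc.mpr ⟨hx.1, hx.2.le⟩))]
          with z hz hgz
        have hxz : x < z := hz.1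
        have hzη : z < x + η := hz.2.trans_le (min_le_left _ _)
        have hsub : Set.Ioc x z ⊆ U := by
          intro w hw
          apply hball
          rw [Metric.mem_ball, Real.dist_eq, abs_of_pos (by linarith [hw.1] : (0:ℝ) < w - x)]
          linarith [hw.2]
        have hmz : m z = m x + (z - x) := by
          rw [hsplit x z hx.1 hxz.le, Set.inter_eq_self_of_subset_right hsub,
            Real.volume_Ioc, ENNReal.toReal_ofReal (by linarith)]
        rw [slope_def_field]
        have habs : |z - x| = z - x := abs_of_pos (by linarith)
        have h1 : f z - f x ≤ (-1) * (z - x) := by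
          simp only [hfdef]
          rw [hmz]
          rw [habs] at hgz
          nlinarith
        have h2 : (f z - f x) / (z - x) ≤ -1 := by
          rw [div_le_iff₀ (by linarith : (0:ℝ) < z - x)]
          linarith
        linarith
      · have hxa : x ≠ a := by
          rintro rfl
          exact hxU (hNU (Or.inr rfl))
        have hxIoo : x ∈ Set.Ioo a b := ⟨lt_of_le_of_ne hx.1 (Ne.symm hxa), hx.2⟩
        have hPx : P x := by
          by_contra hP
          exact hxU (hNU (Or.inl ⟨hP, hxIoo⟩))
        have hslope : Filter.Tendsto (slope g x) (nhdsWithin x {x}ᶜ) (nhds (e x)) :=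
          hasDerivAt_iff_tendsto_slope.mp hPx.1
        have hslope' : Filter.Tendsto (slope g x) (nhdsWithin x (Set.Ioi x)) (nhds (e x)) :=
          hslope.mono_left (nhdsWithin_mono x (fun z hz => ne_of_gt hz))
        apply Filter.Eventually.frequently
        have hev : ∀ᶠ z in nhdsWithin x (Set.Ioi x), slope g x z < r :=
          hslope'.eventually_lt_const (by linarith [hPx.2])
        filter_upwards [hev, self_mem_nhdsWithin] with z hzr hz
        have hxz : x < z := hz
        rw [slope_def_field] at hzr ⊢
        have hmm : m x ≤ m z := by
          rw [hsplit x z hxIoo.1.le hxz.le]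
          simp [ENNReal.toReal_nonneg]
        have h1 : f z - f x ≤ g z - g x := by
          simp only [hfdef]
          nlinarith
        calc (f z - f x) / (z - x) ≤ (g z - g x) / (z - x) :=
              (div_le_div_iff_of_pos_right (by linarith)).mpr h1
          _ < r := hzr
    have hmb : m b ≤ ε := by
      apply ENNReal.toReal_le_of_le_ofReal hε.le
      exact (measure_mono Set.inter_subset_left).trans hUvol.le
    have h0 : 0 ≤ m b := ENNReal.toReal_nonneg
    simp only [hfdef, hBdef] at hfb
    nlinarith
  refine le_of_forall_pos_le_add fun ε hε => ?_
  have hC : (0:ℝ) < K + 1 + (b - a) := by linarith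
  have h := key (ε / (K + 1 + (b - a))) (by positivity)
  calc g b ≤ g a + (ε / (K + 1 + (b - a))) * (K + 1 + (b - a)) := h
    _ = g a + ε := by field_simp

/-- the barrier argument: if `φ' ≤ (φ²−1)φ` a.e., `φ > 0`,
`φ → 1`, and `ψ = φ + (c/δ)e^{−δτ}` also satisfies `ψ' ≤ (φ²−1)φ` a.e.,
then `ψ ≥ 1`, hence `φ ≥ 1 − (c/δ)e^{−δτ}`. -/
theorem barrier_lower_bound (τ₁ c δ : ℝ) (hc : 0 < c) (hδ : 0 < δ)
    (φ d e : ℝ → ℝ)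
    (hφlip : LocallyLipschitz φ)
    (hφpos : ∀ τ, τ₁ ≤ τ → 0 < φ τ)
    (hφae : ∀ᵐ τ ∂(volume.restrict (Set.Ici τ₁)),
      HasDerivAt φ (d τ) τ ∧ d τ ≤ ((φ τ) ^ 2 - 1) * φ τ)
    (hφlim : Filter.Tendsto φ Filter.atTop (nhds 1))
    (hψae : ∀ᵐ τ ∂(volume.restrict (Set.Ici τ₁)),
      HasDerivAt (fun s => φ s + c / δ * Real.exp (-(δ * s))) (e τ) τ
        ∧ e τ ≤ ((φ τ) ^ 2 - 1) * φ τ) :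
    ∀ τ, τ₁ ≤ τ →
      1 ≤ φ τ + c / δ * Real.exp (-(δ * τ))
      ∧ 1 - c / δ * Real.exp (-(δ * τ)) ≤ φ τ := by
  set ψ : ℝ → ℝ := fun s => φ s + c / δ * Real.exp (-(δ * s)) with hψdef
  have hψlip : LocallyLipschitz ψ :=
    hφlip.add (ContDiff.locallyLipschitz (𝕂 := ℝ)
      (f := fun s : ℝ => c / δ * Real.exp (-(δ * s))) (by fun_prop))
  have hψcont : Continuous ψ := hψlip.continuous
  have hψlim : Filter.Tendsto ψ Filter.atTop (nhds 1) := by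
    have h1 : Filter.Tendsto (fun s : ℝ => -(δ * s)) Filter.atTop Filter.atBot :=
      Filter.tendsto_neg_atBot_iff.mpr (Filter.Tendsto.const_mul_atTop hδ tendsto_id)
    have h2 := (Real.tendsto_exp_atBot.comp h1).const_mul (c / δ)
    simpa using hφlim.add h2
  have hepos : ∀ τ : ℝ, 0 < c / δ * Real.exp (-(δ * τ)) := fun τ => by positivity
  -- key monotonicity claim
  have claim : ∀ a t : ℝ, τ₁ ≤ a → a ≤ t → (∀ s ∈ Set.Icc a t, ψ s < 1) → ψ t ≤ ψ a := by
    intro a t hτ₁a hat hlt1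
    obtain ⟨K, hK0, hKloc⟩ := uniform_loc_lip hψlip a t
    apply key_dec (e := e) hat hψcont hK0 hKloc
    have hsub : Set.Ioo a t ⊆ Set.Ici τ₁ := fun s hs => le_trans hτ₁a hs.1.le
    filter_upwards [ae_restrict_of_ae_restrict_of_subset hsub hψae,
      ae_restrict_mem measurableSet_Ioo] with s hs hsIoo
    refine ⟨hs.1, hs.2.trans ?_⟩
    have h1 : 0 < φ s := hφpos s (hsub hsIoo)
    have h2 : ψ s < 1 := hlt1 s ⟨hsIoo.1.le, hsIoo.2.le⟩
    have h3 : φ s < 1 := by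
      have := hepos s
      simp only [hψdef] at h2
      linarith
    nlinarith
  -- the barrier argument
  have claim2 : ∀ τ, τ₁ ≤ τ → 1 ≤ ψ τ := by
    intro τ₂ hτ₂
    by_contra hcon
    push_neg at hcon
    set A : Set ℝ := {t | τ₂ ≤ t ∧ ψ τ₂ < ψ t} with hAdef
    have hAne : A.Nonempty := by
      have h1 : ∀ᶠ t in Filter.atTop, ψ τ₂ < ψ t :=
        hψlim.eventually_const_lt hcon
      obtain ⟨t, ht1, ht2⟩ := (h1.and (Filter.eventually_ge_atTop τ₂)).exists
      exact ⟨t, ht2, ht1⟩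
    have hbdd : BddBelow A := ⟨τ₂, fun t ht => ht.1⟩
    set T := sInf A with hTdef
    have hτ₂T : τ₂ ≤ T := le_csInf hAne (fun t ht => ht.1)
    have hbelow : ∀ s, τ₂ ≤ s → s < T → ψ s ≤ ψ τ₂ := by
      intro s h1 h2
      by_contra hgt
      push_neg at hgt
      exact absurd (csInf_le hbdd ⟨h1, hgt⟩) (not_le.mpr h2)
    have hψT : ψ T ≤ ψ τ₂ := by
      rcases eq_or_lt_of_le hτ₂T with h | h
      · rw [← h]
      · refine le_of_tendsto (((hψcont.tendsto T).mono_left nhdsWithin_le_nhds :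
          Filter.Tendsto ψ (nhdsWithin T (Set.Iio T)) (nhds (ψ T)))) ?_
        filter_upwards [Ioo_mem_nhdsLT_of_mem (Set.mem_Ioc.mpr ⟨h, le_rfl⟩)] with s hs
        exact hbelow s hs.1.le hs.2
    have hev : ∀ᶠ s in nhds T, ψ s < 1 :=
      (hψcont.tendsto T).eventually_lt_const (by linarith)
    obtain ⟨ε, hε, hball⟩ := Metric.eventually_nhds_iff.mp hev
    obtain ⟨t, htA, htlt⟩ := exists_lt_of_csInf_lt hAne (by linarith : sInf A < T + ε)
    have hTt : T ≤ t := csInf_le hbdd htA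
    have hlt1 : ∀ s ∈ Set.Icc τ₂ t, ψ s < 1 := by
      intro s hs
      rcases lt_or_ge s T with h | h
      · exact lt_of_le_of_lt (hbelow s hs.1 h) hcon
      · apply hball
        rw [Real.dist_eq, abs_of_nonneg (by linarith)]
        linarith [hs.2]
    have := claim τ₂ t hτ₂ (hτ₂T.trans hTt) hlt1
    linarith [htA.2]
  intro τ hτ
  have h1 := claim2 τ hτ
  simp only [hψdef] at h1
  exact ⟨h1, by linarith⟩
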